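/- The integral of 1/√Δ(t) over the tetrahedron 𝒯 equals π², where Δ(t) = ((t₁₁+t₂₂)² − (1−t₃₃)²)·((t₁₁−t₂₂)² − (1+t₃₃)²). -/

import Mathlib

open MeasureTheory Real

def tetra : Set (Fin 3 → ℝ) :=
  {t | 0 ≤ 1 - t 0 - t 1 - t 2 ∧ 0 ≤ 1 - t 0 + t 1 + t 2 ∧
       0 ≤ 1 + t 0 - t 1 + t 2 ∧ 0 ≤ 1 + t 0 + t 1 - t 2}

/-- `Δ(t) = ((t₁₁+t₂₂)² − (1−t₃₃)²)((t₁₁−t₂₂)² − (1+t₃₃)²)`. -/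
noncomputable def deltaFun (t : Fin 3 → ℝ) : ℝ :=
  ((t 0 + t 1)^2 - (1 - t 2)^2) * ((t 0 - t 1)^2 - (1 + t 2)^2)

lemma lintegral_inv_sqrt_sub_sq {a : ℝ} (ha : 0 < a) :
    ∫⁻ x in Set.Ioo (-a) a, ENNReal.ofReal (1 / Real.sqrt (a^2 - x^2)) = ENNReal.ofReal π := by
  have hsub : Set.Ioo (-(π/2)) (π/2) ⊆ Set.Icc (-(π/2)) (π/2) := Set.Ioo_subset_Icc_self
  have himg : (fun θ => a * Real.sin θ) '' Set.Ioo (-(π/2)) (π/2) = Set.Ioo (-a) a := by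
    ext x
    constructor
    · rintro ⟨θ, hθ, rfl⟩
      have h1 : Real.sin θ < 1 := by
        have := Real.strictMonoOn_sin (hsub hθ) (Set.right_mem_Icc.2 (by linarith [Real.pi_pos])) hθ.2
        simpa using this
      have h2 : -1 < Real.sin θ := by
        have := Real.strictMonoOn_sin (Set.left_mem_Icc.2 (by linarith [Real.pi_pos])) (hsub hθ) hθ.1
        simpa using this
      constructor
      · show -a < a * Real.sin θ; nlinarith
      · show a * Real.sin θ < a; nlinarith
    · rintro ⟨h1, h2⟩
      refine ⟨Real.arcsin (x / a), ⟨?_, ?_⟩, ?_⟩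
      · exact Real.neg_pi_div_two_lt_arcsin.2 (by rw [lt_div_iff₀ ha]; linarith)
      · exact Real.arcsin_lt_pi_div_two.2 (by rw [div_lt_one ha]; linarith)
      · show a * Real.sin (Real.arcsin (x/a)) = x
        rw [Real.sin_arcsin (by rw [le_div_iff₀ ha]; linarith) (by rw [div_le_one ha]; linarith)]
        field_simp
  rw [← himg, lintegral_image_eq_lintegral_abs_det_fderiv_mul volume measurableSet_Ioo
      (f' := fun θ => ContinuousLinearMap.smulRight (1 : ℝ →L[ℝ] ℝ) (a * Real.cos θ))
      (fun θ _ => ((Real.hasDerivAt_sin θ).const_mul a).hasFDerivAt.hasFDerivWithinAt)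
      (fun x hx y hy hxy => Real.injOn_sin (hsub hx) (hsub hy) (mul_left_cancel₀ ha.ne' hxy))]
  have : ∀ θ ∈ Set.Ioo (-(π/2)) (π/2),
      ENNReal.ofReal |(ContinuousLinearMap.smulRight (1 : ℝ →L[ℝ] ℝ) (a * Real.cos θ)).det| *
        ENNReal.ofReal (1 / Real.sqrt (a^2 - (a * Real.sin θ)^2)) = 1 := by
    intro θ hθ
    have hcos : 0 < Real.cos θ := Real.cos_pos_of_mem_Ioo hθ
    have hac : 0 < a * Real.cos θ := mul_pos ha hcos
    have hs : Real.sqrt (a^2 - (a * Real.sin θ)^2) = a * Real.cos θ := by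
      have h : a^2 - (a * Real.sin θ)^2 = (a * Real.cos θ)^2 := by
        have := Real.sin_sq_add_cos_sq θ; nlinarith
      rw [h, Real.sqrt_sq hac.le]
    rw [ContinuousLinearMap.smulRight_one_eq_toSpanSingleton, ContinuousLinearMap.det_toSpanSingleton, abs_of_pos hac, hs,
      ← ENNReal.ofReal_mul hac.le, mul_one_div, div_self hac.ne', ENNReal.ofReal_one]
  rw [setLIntegral_congr_fun measurableSet_Ioo this]
  simp [Real.volume_Ioo]

lemma key_int (a : ℝ) :
    ∫⁻ x : ℝ, (if |x| ≤ a then ENNReal.ofReal (1 / Real.sqrt (a^2 - x^2)) else 0)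
      = if 0 < a then ENNReal.ofReal π else 0 := by
  rcases lt_or_ge 0 a with ha | ha
  · rw [if_pos ha]
    have h1 : ∀ x : ℝ, (if |x| ≤ a then ENNReal.ofReal (1 / Real.sqrt (a^2 - x^2)) else 0)
        = (Set.Icc (-a) a).indicator (fun x => ENNReal.ofReal (1 / Real.sqrt (a^2 - x^2))) x := by
      intro x
      rw [Set.indicator_apply]
      congr 1
      simp [abs_le, Set.mem_Icc]
    simp_rw [h1]
    rw [lintegral_indicator measurableSet_Icc,
      setLIntegral_congr (MeasureTheory.Ioo_ae_eq_Icc (μ := volume) (a := -a) (b := a)).symm]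
    exact lintegral_inv_sqrt_sub_sq ha
  · rw [if_neg (not_lt.2 ha)]
    have h1 : ∀ x : ℝ, (if |x| ≤ a then ENNReal.ofReal (1 / Real.sqrt (a^2 - x^2)) else 0) = 0 := by
      intro x
      split_ifs with h
      · have h0 : a ^ 2 - x ^ 2 = 0 := by
          have := abs_nonneg x
          have hx : |x| = 0 := le_antisymm (h.trans ha) this
          have ha0 : a = 0 := le_antisymm ha (by linarith)
          have hx0 : x = 0 := abs_eq_zero.1 hx
          rw [ha0, hx0]; ring
        simp [h0]
      · rfl
    simp_rw [h1, lintegral_zero]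

noncomputable def Mmat : Matrix (Fin 3) (Fin 3) ℝ := !![1/2, 1/2, 0; 1/2, -1/2, 0; 0, 0, 1]

lemma meas_piece : Measurable (fun z : ℝ × ℝ =>
    if |z.1| ≤ z.2 then ENNReal.ofReal (1 / Real.sqrt (z.2^2 - z.1^2)) else 0) := by
  refine Measurable.ite (measurableSet_le (by fun_prop) (by fun_prop)) ?_ measurable_const
  refine Measurable.ennreal_ofReal (Measurable.div measurable_const ?_)
  exact (Real.continuous_sqrt.comp (by fun_prop)).measurable

/-- The quantum Fisher volume of all two-qubit states with maximally disordered
subsystems: `∫_𝒯 Δ(t)^{-1/2} dt = π²`. -/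
theorem quantum_fisher_volume_tetra :
    ∫ t in tetra, 1 / Real.sqrt (deltaFun t) = π ^ 2 := by
  classical
  have hcontΔ : Continuous deltaFun := by
    unfold deltaFun; fun_prop
  have hmeasf : Measurable fun t : Fin 3 → ℝ => ENNReal.ofReal (1 / Real.sqrt (deltaFun t)) := by
    refine Measurable.ennreal_ofReal (Measurable.div measurable_const ?_)
    exact (Real.continuous_sqrt.comp hcontΔ).measurable
  have htetra : MeasurableSet tetra := by
    have h : tetra = {t : Fin 3 → ℝ | 0 ≤ 1 - t 0 - t 1 - t 2} ∩ ({t | 0 ≤ 1 - t 0 + t 1 + t 2} ∩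
        ({t | 0 ≤ 1 + t 0 - t 1 + t 2} ∩ {t | 0 ≤ 1 + t 0 + t 1 - t 2})) := rfl
    rw [h]
    refine MeasurableSet.inter ?_ (MeasurableSet.inter ?_ (MeasurableSet.inter ?_ ?_)) <;>
      exact measurableSet_le (by fun_prop) (by fun_prop)
  -- the indicator function
  set G : (Fin 3 → ℝ) → ENNReal :=
    tetra.indicator (fun t => ENNReal.ofReal (1 / Real.sqrt (deltaFun t))) with hG
  have hGmeas : Measurable G := hmeasf.indicator htetra
  -- linear change of variables
  set ψ : (Fin 3 → ℝ) → (Fin 3 → ℝ) := ⇑(Matrix.toLin' Mmat) with hψdef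
  have hψmeas : Measurable ψ := (Matrix.toLin' Mmat).continuous_on_pi.measurable
  have hdet : Mmat.det = -(1/2) := by
    simp [Mmat, Matrix.det_fin_three]; ring
  have hmap : Measure.map ψ volume = ENNReal.ofReal 2 • volume := by
    rw [hψdef, Real.map_matrix_volume_pi_eq_smul_volume_pi (by rw [hdet]; norm_num)]
    rw [hdet]
    norm_num
  have hψ0 : ∀ p : Fin 3 → ℝ, ψ p 0 = p 0 / 2 + p 1 / 2 := by
    intro p
    simp [hψdef, Mmat, Matrix.toLin'_apply, Matrix.mulVec, dotProduct, Fin.sum_univ_three, Matrix.vecHead, Matrix.vecTail]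
    ring
  have hψ1 : ∀ p : Fin 3 → ℝ, ψ p 1 = p 0 / 2 - p 1 / 2 := by
    intro p
    simp [hψdef, Mmat, Matrix.toLin'_apply, Matrix.mulVec, dotProduct, Fin.sum_univ_three, Matrix.vecHead, Matrix.vecTail]
    ring
  have hψ2 : ∀ p : Fin 3 → ℝ, ψ p 2 = p 2 := by
    intro p
    simp [hψdef, Mmat, Matrix.toLin'_apply, Matrix.mulVec, dotProduct, Fin.sum_univ_three, Matrix.vecHead, Matrix.vecTail]
  -- pointwise factorization of G ∘ ψ
  have hGψ : ∀ p : Fin 3 → ℝ, G (ψ p) =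
      (if |p 0| ≤ 1 - p 2 then ENNReal.ofReal (1 / Real.sqrt ((1 - p 2)^2 - (p 0)^2)) else 0) *
      (if |p 1| ≤ 1 + p 2 then ENNReal.ofReal (1 / Real.sqrt ((1 + p 2)^2 - (p 1)^2)) else 0) := by
    intro p
    by_cases h : ψ p ∈ tetra
    · rw [hG, Set.indicator_of_mem h]
      obtain ⟨h1, h2, h3, h4⟩ := h
      rw [hψ0, hψ1, hψ2] at h1 h2 h3 h4
      have hu : |p 0| ≤ 1 - p 2 := abs_le.2 ⟨by linarith, by linarith⟩
      have hv : |p 1| ≤ 1 + p 2 := abs_le.2 ⟨by linarith, by linarith⟩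
      have hunn : (0:ℝ) ≤ (1 - p 2)^2 - (p 0)^2 := by
        have := abs_le.1 hu
        nlinarith [sq_abs (p 0)]
      have hΔ : deltaFun (ψ p) = ((1 - p 2)^2 - (p 0)^2) * ((1 + p 2)^2 - (p 1)^2) := by
        unfold deltaFun
        rw [hψ0, hψ1, hψ2]
        ring
      rw [if_pos hu, if_pos hv,
        ← ENNReal.ofReal_mul (div_nonneg zero_le_one (Real.sqrt_nonneg _))]
      congr 1
      rw [hΔ, Real.sqrt_mul hunn, div_mul_div_comm, one_mul]
    · rw [hG, Set.indicator_of_notMem h]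
      by_cases hu : |p 0| ≤ 1 - p 2
      · by_cases hv : |p 1| ≤ 1 + p 2
        · exfalso
          apply h
          obtain ⟨ha1, ha2⟩ := abs_le.1 hu
          obtain ⟨hb1, hb2⟩ := abs_le.1 hv
          refine ⟨?_, ?_, ?_, ?_⟩ <;> rw [hψ0, hψ1, hψ2] <;> linarith
        · rw [if_neg hv, mul_zero]
      · rw [if_neg hu, zero_mul]
  -- lintegral over tetra
  have step1 : ∫ t in tetra, 1 / Real.sqrt (deltaFun t)
      = (∫⁻ t, G t).toReal := by
    rw [MeasureTheory.integral_eq_lintegral_of_nonneg_ae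
        (Filter.Eventually.of_forall fun t => div_nonneg zero_le_one (Real.sqrt_nonneg _))
        (((Real.continuous_sqrt.comp hcontΔ).measurable.const_div 1).aestronglyMeasurable),
      hG, ← lintegral_indicator htetra]
  -- change of variables
  have step2 : ∫⁻ p, G (ψ p) = ENNReal.ofReal 2 * ∫⁻ t, G t := by
    rw [← lintegral_map hGmeas hψmeas, hmap, lintegral_smul_measure, smul_eq_mul]
  -- compute ∫⁻ p, G (ψ p)
  have hmeasA : Measurable (fun p : Fin 3 → ℝ =>
      (if |p 0| ≤ 1 - p 2 then ENNReal.ofReal (1 / Real.sqrt ((1 - p 2)^2 - (p 0)^2)) else 0) *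
      (if |p 1| ≤ 1 + p 2 then ENNReal.ofReal (1 / Real.sqrt ((1 + p 2)^2 - (p 1)^2)) else 0)) := by
    refine Measurable.mul ?_ ?_
    · exact meas_piece.comp (show Measurable (fun p : Fin 3 → ℝ => ((p 0 : ℝ), 1 - p 2)) by fun_prop)
    · exact meas_piece.comp (show Measurable (fun p : Fin 3 → ℝ => ((p 1 : ℝ), 1 + p 2)) by fun_prop)
  have hmeas2 : Measurable (fun z : ℝ × (Fin 2 → ℝ) =>
      (if |z.1| ≤ 1 - z.2 1 then ENNReal.ofReal (1 / Real.sqrt ((1 - z.2 1)^2 - z.1^2)) else 0) *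
      (if |z.2 0| ≤ 1 + z.2 1 then ENNReal.ofReal (1 / Real.sqrt ((1 + z.2 1)^2 - (z.2 0)^2)) else 0)) := by
    refine Measurable.mul ?_ ?_
    · exact meas_piece.comp (show Measurable (fun z : ℝ × (Fin 2 → ℝ) => ((z.1 : ℝ), 1 - z.2 1)) by fun_prop)
    · exact meas_piece.comp (show Measurable (fun z : ℝ × (Fin 2 → ℝ) => ((z.2 0 : ℝ), 1 + z.2 1)) by fun_prop)
  have hmeas3 : Measurable (fun y : ℝ × ℝ =>
      (if 0 < 1 - y.2 then ENNReal.ofReal π else 0) *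
      (if |y.1| ≤ 1 + y.2 then ENNReal.ofReal (1 / Real.sqrt ((1 + y.2)^2 - y.1^2)) else 0)) := by
    refine Measurable.mul ?_ ?_
    · exact Measurable.ite (measurableSet_lt measurable_const (by fun_prop)) measurable_const
        measurable_const
    · exact meas_piece.comp (show Measurable (fun y : ℝ × ℝ => ((y.1 : ℝ), 1 + y.2)) by fun_prop)
  -- move to ℝ × (Fin 2 → ℝ)
  have h_e1 : ∀ z : ℝ × (Fin 2 → ℝ),
      ((MeasurableEquiv.piFinSuccAbove (fun _ : Fin 3 => ℝ) 0).symm z) = Fin.cons z.1 z.2 := by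
    intro z
    simp [MeasurableEquiv.piFinSuccAbove_symm_apply]
    rfl
  have step3 : ∫⁻ p, G (ψ p) = ∫⁻ z : ℝ × (Fin 2 → ℝ),
      (if |z.1| ≤ 1 - z.2 1 then ENNReal.ofReal (1 / Real.sqrt ((1 - z.2 1)^2 - z.1^2)) else 0) *
      (if |z.2 0| ≤ 1 + z.2 1 then ENNReal.ofReal (1 / Real.sqrt ((1 + z.2 1)^2 - (z.2 0)^2)) else 0) := by
    rw [lintegral_congr hGψ,
      ← ((volume_preserving_piFinSuccAbove (fun _ : Fin 3 => ℝ) 0).symm _).lintegral_comp hmeasA]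
    refine lintegral_congr fun z => ?_
    rw [h_e1]
    rfl
  have step4 : ∫⁻ z : ℝ × (Fin 2 → ℝ),
      (if |z.1| ≤ 1 - z.2 1 then ENNReal.ofReal (1 / Real.sqrt ((1 - z.2 1)^2 - z.1^2)) else 0) *
      (if |z.2 0| ≤ 1 + z.2 1 then ENNReal.ofReal (1 / Real.sqrt ((1 + z.2 1)^2 - (z.2 0)^2)) else 0)
      = ∫⁻ q : Fin 2 → ℝ, (if 0 < 1 - q 1 then ENNReal.ofReal π else 0) *
        (if |q 0| ≤ 1 + q 1 then ENNReal.ofReal (1 / Real.sqrt ((1 + q 1)^2 - (q 0)^2)) else 0) := by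
    rw [MeasureTheory.Measure.volume_eq_prod, lintegral_prod_symm _ hmeas2.aemeasurable]
    refine lintegral_congr fun q => ?_
    have hmx : Measurable (fun x : ℝ =>
        if |x| ≤ 1 - q 1 then ENNReal.ofReal (1 / Real.sqrt ((1 - q 1)^2 - x^2)) else 0) :=
      meas_piece.comp (show Measurable (fun x : ℝ => ((x : ℝ), 1 - q 1)) by fun_prop)
    show (∫⁻ x : ℝ, (if |x| ≤ 1 - q 1 then ENNReal.ofReal (1 / Real.sqrt ((1 - q 1)^2 - x^2)) else 0) *
        (if |q 0| ≤ 1 + q 1 then ENNReal.ofReal (1 / Real.sqrt ((1 + q 1)^2 - (q 0)^2)) else 0)) = _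
    rw [lintegral_mul_const _ hmx]
    congr 1
    exact key_int (1 - q 1)
  have step5 : ∫⁻ q : Fin 2 → ℝ, (if 0 < 1 - q 1 then ENNReal.ofReal π else 0) *
        (if |q 0| ≤ 1 + q 1 then ENNReal.ofReal (1 / Real.sqrt ((1 + q 1)^2 - (q 0)^2)) else 0)
      = ∫⁻ y : ℝ × ℝ, (if 0 < 1 - y.2 then ENNReal.ofReal π else 0) *
        (if |y.1| ≤ 1 + y.2 then ENNReal.ofReal (1 / Real.sqrt ((1 + y.2)^2 - y.1^2)) else 0) := by
    have hm : Measurable (fun q : Fin 2 → ℝ => (if 0 < 1 - q 1 then ENNReal.ofReal π else 0) *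
        (if |q 0| ≤ 1 + q 1 then ENNReal.ofReal (1 / Real.sqrt ((1 + q 1)^2 - (q 0)^2)) else 0)) := by
      refine Measurable.mul ?_ ?_
      · exact Measurable.ite (measurableSet_lt measurable_const (by fun_prop)) measurable_const
          measurable_const
      · exact meas_piece.comp (show Measurable (fun q : Fin 2 → ℝ => ((q 0 : ℝ), 1 + q 1)) by fun_prop)
    rw [← ((volume_preserving_finTwoArrow ℝ).symm _).lintegral_comp hm]
    refine lintegral_congr fun y => ?_
    rfl
  have step6 : ∫⁻ y : ℝ × ℝ, (if 0 < 1 - y.2 then ENNReal.ofReal π else 0) *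
        (if |y.1| ≤ 1 + y.2 then ENNReal.ofReal (1 / Real.sqrt ((1 + y.2)^2 - y.1^2)) else 0)
      = ∫⁻ w : ℝ, (if 0 < 1 - w then ENNReal.ofReal π else 0) *
        (if 0 < 1 + w then ENNReal.ofReal π else 0) := by
    rw [MeasureTheory.Measure.volume_eq_prod, lintegral_prod_symm _ hmeas3.aemeasurable]
    refine lintegral_congr fun w => ?_
    have hmv : Measurable (fun v : ℝ =>
        if |v| ≤ 1 + w then ENNReal.ofReal (1 / Real.sqrt ((1 + w)^2 - v^2)) else 0) :=
      meas_piece.comp (show Measurable (fun v : ℝ => ((v : ℝ), 1 + w)) by fun_prop)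
    show (∫⁻ v : ℝ, (if 0 < 1 - w then ENNReal.ofReal π else 0) *
        (if |v| ≤ 1 + w then ENNReal.ofReal (1 / Real.sqrt ((1 + w)^2 - v^2)) else 0)) = _
    rw [lintegral_const_mul _ hmv]
    congr 1
    exact key_int (1 + w)
  have step7 : ∫⁻ w : ℝ, (if 0 < 1 - w then ENNReal.ofReal π else 0) *
        (if 0 < 1 + w then ENNReal.ofReal π else 0)
      = ENNReal.ofReal π * ENNReal.ofReal π * ENNReal.ofReal 2 := by
    have hpt : ∀ w : ℝ, (if 0 < 1 - w then ENNReal.ofReal π else 0) *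
        (if 0 < 1 + w then ENNReal.ofReal π else 0)
        = (Set.Ioo (-1 : ℝ) 1).indicator (fun _ => ENNReal.ofReal π * ENNReal.ofReal π) w := by
      intro w
      by_cases hw1 : 0 < 1 - w
      · by_cases hw2 : 0 < 1 + w
        · rw [if_pos hw1, if_pos hw2,
            Set.indicator_of_mem (show w ∈ Set.Ioo (-1:ℝ) 1 from ⟨by linarith, by linarith⟩)]
        · rw [if_neg hw2, mul_zero,
            Set.indicator_of_notMem (show w ∉ Set.Ioo (-1:ℝ) 1 from fun hmem => hw2 (by linarith [hmem.1]))]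
      · rw [if_neg hw1, zero_mul,
          Set.indicator_of_notMem (show w ∉ Set.Ioo (-1:ℝ) 1 from fun hmem => hw1 (by linarith [hmem.2]))]
    rw [lintegral_congr hpt, lintegral_indicator measurableSet_Ioo, setLIntegral_const,
      Real.volume_Ioo]
    norm_num
  -- put everything together
  have hG2 : ∫⁻ t, G t = ENNReal.ofReal π * ENNReal.ofReal π := by
    have h2 : ENNReal.ofReal 2 * ∫⁻ t, G t
        = ENNReal.ofReal 2 * (ENNReal.ofReal π * ENNReal.ofReal π) := by
      rw [← step2, step3, step4, step5, step6, step7]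
      ring
    exact (ENNReal.mul_right_inj (by simp) ENNReal.ofReal_ne_top).1 h2
  rw [step1, hG2, ← ENNReal.ofReal_mul Real.pi_pos.le,
    ENNReal.toReal_ofReal (by positivity), sq]
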